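/- The proper rope cover of a finite set of arcs E has minimum cardinality among all rope covers of E: for every rope cover R of E, |R_pr| ≤ |R|, where R_pr is the proper rope cover. -/

import Mathlib

def leansOn (a b : ℕ × ℕ) : Prop :=
  b.1 ≤ a.1 ∧ a.1 < a.2 ∧ a.2 ≤ b.2 ∧ a ≠ b ∧ (a.1 = b.1 ∨ a.2 = b.2)

def IsRopeCover (E R : Finset (ℕ × ℕ)) : Prop :=
  R ⊆ E ∧ ∀ a ∈ E \ R, ∃ b ∈ R, leansOn a b

def IsProper (R : Finset (ℕ × ℕ)) : Prop := ∀ a ∈ R, ∀ b ∈ R, ¬ leansOn a b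

lemma leansOn_iff {a b : ℕ × ℕ} : leansOn a b ↔
    b.1 ≤ a.1 ∧ a.1 < a.2 ∧ a.2 ≤ b.2 ∧ ¬(a.1 = b.1 ∧ a.2 = b.2) ∧
      (a.1 = b.1 ∨ a.2 = b.2) := by
  unfold leansOn
  constructor <;> rintro ⟨h1, h2, h3, h4, h5⟩ <;> refine ⟨h1, h2, h3, ?_, h5⟩
  · intro h; exact h4 (Prod.ext h.1 h.2)
  · intro h; exact h4 ⟨congrArg Prod.fst h, congrArg Prod.snd h⟩

/-- The proper rope cover has minimum cardinality among all rope covers. -/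
theorem proper_ropeCover_min_card (E : Finset (ℕ × ℕ)) (hE : ∀ a ∈ E, a.1 < a.2)
    (Rpr : Finset (ℕ × ℕ)) (hpr : IsRopeCover E Rpr) (hprop : IsProper Rpr)
    (R : Finset (ℕ × ℕ)) (hR : IsRopeCover E R) :
    Rpr.card ≤ R.card := by
  classical
  obtain ⟨hprE, hprC⟩ := hpr
  obtain ⟨hRE, hRC⟩ := hR
  have key : ∀ a ∈ Rpr, ∃ b ∈ R, a = b ∨ leansOn a b := by
    intro a ha
    by_cases h : a ∈ R
    · exact ⟨a, h, Or.inl rfl⟩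
    · obtain ⟨b, hb, hlb⟩ := hRC a (Finset.mem_sdiff.2 ⟨hprE ha, h⟩)
      exact ⟨b, hb, Or.inr hlb⟩
  choose f hf1 hf2 using key
  refine Finset.card_le_card_of_injOn
    (fun a => if h : a ∈ Rpr then f a h else a) ?_ ?_
  · intro a ha
    rw [Finset.mem_coe] at ha
    simp only [ha, dif_pos]
    exact hf1 a ha
  · intro a1 h1' a2 h2' heq
    simp only [Finset.mem_coe] at h1' h2'
    simp only [h1', h2', dif_pos] at heq
    by_contra hne
    set b := f a1 h1' with hb1
    have hbR : b ∈ R := hf1 a1 h1'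
    have case1 := hf2 a1 h1'
    have case2 := hf2 a2 h2'
    rw [← heq] at case2
    rcases case1 with e1 | l1
    · rcases case2 with e2 | l2
      · exact hne (e1.trans e2.symm)
      · exact hprop a2 h2' a1 h1' (e1 ▸ l2)
    · rcases case2 with e2 | l2
      · exact hprop a1 h1' a2 h2' (e2 ▸ l1)
      · -- both a1 and a2 lean on b
        rw [leansOn_iff] at l1 l2
        obtain ⟨p1, p2, p3, p4, p5⟩ := l1
        obtain ⟨q1, q2, q3, q4, q5⟩ := l2
        have hne' : ¬(a1.1 = a2.1 ∧ a1.2 = a2.2) := fun h => hne (Prod.ext h.1 h.2)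
        -- if a1 and a2 share the same side of b, one leans on the other
        have same_left : a1.1 = b.1 → a2.1 = b.1 → False := by
          intro e1 e2
          rcases lt_trichotomy a1.2 a2.2 with h | h | h
          · exact hprop a1 h1' a2 h2' (leansOn_iff.2 (by omega))
          · exact hne' ⟨by omega, h⟩
          · exact hprop a2 h2' a1 h1' (leansOn_iff.2 (by omega))
        have same_right : a1.2 = b.2 → a2.2 = b.2 → False := by
          intro e1 e2
          rcases lt_trichotomy a1.1 a2.1 with h | h | h
          · exact hprop a2 h2' a1 h1' (leansOn_iff.2 (by omega))
          · exact hne' ⟨h, by omega⟩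
          · exact hprop a1 h1' a2 h2' (leansOn_iff.2 (by omega))
        -- mixed case: WLOG a1 shares left, a2 shares right
        have mixed : ∀ c1 c2 : ℕ × ℕ, c1 ∈ Rpr → c2 ∈ Rpr →
            b.1 ≤ c1.1 → c1.1 < c1.2 → c1.2 ≤ b.2 → ¬(c1.1 = b.1 ∧ c1.2 = b.2) →
            b.1 ≤ c2.1 → c2.1 < c2.2 → c2.2 ≤ b.2 → ¬(c2.1 = b.1 ∧ c2.2 = b.2) →
            c1.1 = b.1 → c2.2 = b.2 → False := by
          intro c1 c2 hc1 hc2 r1 r2 r3 r4 s1 s2 s3 s4 e1 e2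
          by_cases hbpr : b ∈ Rpr
          · exact hprop c1 hc1 b hbpr (leansOn_iff.2 (by omega))
          · obtain ⟨c, hc, hbc⟩ := hprC b (Finset.mem_sdiff.2 ⟨hRE hbR, hbpr⟩)
            rw [leansOn_iff] at hbc
            obtain ⟨t1, t2, t3, t4, t5⟩ := hbc
            rcases t5 with t5 | t5
            · -- b shares left with c; then c1 leans on c unless c1 = c
              by_cases hcc : c1 = c
              · subst hcc; omega
              · refine hprop c1 hc1 c hc (leansOn_iff.2 ?_)
                have : ¬(c1.1 = c.1 ∧ c1.2 = c.2) :=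
                  fun h => hcc (Prod.ext h.1 h.2)
                omega
            · by_cases hcc : c2 = c
              · subst hcc; omega
              · refine hprop c2 hc2 c hc (leansOn_iff.2 ?_)
                have : ¬(c2.1 = c.1 ∧ c2.2 = c.2) :=
                  fun h => hcc (Prod.ext h.1 h.2)
                omega
        rcases p5 with p5 | p5 <;> rcases q5 with q5 | q5
        · exact same_left p5 q5
        · exact mixed a1 a2 h1' h2' p1 p2 p3 p4 q1 q2 q3 q4 p5 q5
        · exact mixed a2 a1 h2' h1' q1 q2 q3 q4 p1 p2 p3 p4 q5 p5
        · exact same_right p5 q5
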